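/- arXiv:2001.08187 — 2 statements merged into one kernel-verified Lean document; each statement's English description precedes it below -/
import Mathlib

section
/- Let T : Fin n₁ × ⋯ × Fin n_d → ℝ be a tensor and suppose (G₁,…,G_d) is a Tensor-Train decomposition of T with ranks (r₀,…,r_d). Then for every l ∈ {1,…,d−1}, the rank of the l-matricization of T satisfies rank T^{(l)} ≤ r_l. -/
open MeasureTheory Matrix

noncomputable section

/-- Evaluation of a Tensor-Train decomposition with ranks `r 0, …, r d`:
`T(i₁,…,i_d) = G₁(i₁)⋯G_d(i_d)` written as a sum over all intermediate indices. -/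
def ttEval {d : ℕ} {n : Fin d → ℕ} (r : ℕ → ℕ)
    (G : ∀ j : Fin d, Fin (n j) → Fin (r j.1) → Fin (r (j.1 + 1)) → ℝ)
    (i : ∀ j, Fin (n j)) : ℝ :=
  ∑ α : ∀ j : Fin (d + 1), Fin (r j.1),
    ∏ j : Fin d, G j (i j) (α ⟨j.1, by omega⟩) (α ⟨j.1 + 1, by omega⟩)

/-- `(G, r)` is a Tensor-Train decomposition of the tensor `T` (with ranks `r 0 = r d = 1`). -/
def IsTTRep {d : ℕ} {n : Fin d → ℕ} (T : (∀ j, Fin (n j)) → ℝ) (r : ℕ → ℕ)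
    (G : ∀ j : Fin d, Fin (n j) → Fin (r j.1) → Fin (r (j.1 + 1)) → ℝ) : Prop :=
  r 0 = 1 ∧ r d = 1 ∧ ∀ i, T i = ttEval r G i

/-- The `l`-matricization of a tensor: rows are indexed by the first `l` indices,
columns by the remaining ones. -/
def matricize {d : ℕ} {n : Fin d → ℕ} (T : (∀ j, Fin (n j)) → ℝ) (l : ℕ) :
    Matrix (∀ j : {j : Fin d // j.1 < l}, Fin (n j.1))
      (∀ j : {j : Fin d // ¬ j.1 < l}, Fin (n j.1)) ℝ :=
  fun x y => T fun j => if h : j.1 < l then x ⟨j, h⟩ else y ⟨j, h⟩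

/-- Evaluation of a functional Tensor-Train (FTT) decomposition with cores `γ`. -/
def fttEval {d : ℕ} (r : ℕ → ℕ)
    (γ : ∀ j : Fin d, Fin (r j.1) → ℝ → Fin (r (j.1 + 1)) → ℝ)
    (x : Fin d → ℝ) : ℝ :=
  ∑ α : ∀ j : Fin (d + 1), Fin (r j.1),
    ∏ j : Fin d, γ j (α ⟨j.1, by omega⟩) (x j) (α ⟨j.1 + 1, by omega⟩)

/-- `f` has an FTT representation (almost everywhere) with measurable cores `γ`
and ranks `r 0 = 1, r 1, …, r (d-1), r d = 1`. -/
def IsFTTRepAE {d : ℕ} (f : (Fin d → ℝ) → ℝ) (r : ℕ → ℕ)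
    (γ : ∀ j : Fin d, Fin (r j.1) → ℝ → Fin (r (j.1 + 1)) → ℝ) : Prop :=
  r 0 = 1 ∧ r d = 1 ∧ (∀ j a b, Measurable fun t => γ j a t b) ∧
    ∀ᵐ x : Fin d → ℝ, f x = fttEval r γ x

/-- The first `k` coordinates of `x : ℝ^d` (as an element of `ℝ^k`). -/
def firstCoords (d k : ℕ) (x : Fin d → ℝ) : Fin k → ℝ :=
  fun i => if h : i.1 < d then x ⟨i.1, h⟩ else 0

/-- The last `d - k` coordinates of `x : ℝ^d` (as an element of `ℝ^(d-k)`). -/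
def lastCoords (d k : ℕ) (x : Fin d → ℝ) : Fin (d - k) → ℝ :=
  fun i => x ⟨k + i.1, by omega⟩

/-- `g : ℝ^d → ℝ` has `k`-separation rank at most `R`. -/
def HasSepRankLE {d : ℕ} (g : (Fin d → ℝ) → ℝ) (k R : ℕ) : Prop :=
  ∃ (u : Fin R → (Fin k → ℝ) → ℝ) (v : Fin R → (Fin (d - k) → ℝ) → ℝ),
    (∀ j, MemLp (u j) 2 volume) ∧ (∀ j, MemLp (v j) 2 volume) ∧
    ∀ᵐ x : Fin d → ℝ, g x = ∑ j, u j (firstCoords d k x) * v j (lastCoords d k x)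

/-- The unnormalized Gaussian density `f_Γ(x) = exp(-½ xᵀ Γ x)`. -/
def gaussDensity {d : ℕ} (Γ : Matrix (Fin d) (Fin d) ℝ) (x : Fin d → ℝ) : ℝ :=
  Real.exp (-(1 / 2) * (x ⬝ᵥ Γ.mulVec x))

/-- The cube `[-a, a]^d ⊆ ℝ^d`. -/
def cube (d : ℕ) (a : ℝ) : Set (Fin d → ℝ) := Set.univ.pi fun _ => Set.Icc (-a) a

/-- The `k`-th subdiagonal block `A_k = (Γ_{ij})_{k+1 ≤ i ≤ d, 1 ≤ j ≤ k}` of a `d × d` matrix. -/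
def subdiagBlock {d : ℕ} (Γ : Matrix (Fin d) (Fin d) ℝ) (k : ℕ) :
    Matrix (Fin (d - k)) (Fin k) ℝ :=
  fun i j => if h : j.1 < d then Γ ⟨k + i.1, by omega⟩ ⟨j.1, h⟩ else 0

/-- The singular values of a real matrix (in unspecified order):
square roots of the eigenvalues of `Aᵀ * A`. -/
def singularValues {m k : ℕ} (A : Matrix (Fin m) (Fin k) ℝ) : Fin k → ℝ :=
  fun i => Real.sqrt ((Matrix.isHermitian_conjTranspose_mul_self A).eigenvalues i)

end
noncomputable section TTAux

variable {d : ℕ} {n : Fin d → ℕ} (r : ℕ → ℕ)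

/-- Index value at position `k ≤ l` built from a left partial index `a` and a middle index `b`. -/
def leftIdx (l : ℕ) (a : ∀ j : {j : Fin (d + 1) // j.1 < l}, Fin (r j.1.1)) (b : Fin (r l))
    (k : Fin (d + 1)) (hk : k.1 ≤ l) : Fin (r k.1) :=
  if h : k.1 < l then a ⟨k, h⟩ else Fin.cast (congrArg r (by omega)) b

/-- Index value at position `k ≥ l` built from a middle index `b` and a right partial index `c`. -/
def rightIdx (l : ℕ) (b : Fin (r l)) (c : ∀ j : {j : Fin (d + 1) // l < j.1}, Fin (r j.1.1))
    (k : Fin (d + 1)) (hk : l ≤ k.1) : Fin (r k.1) :=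
  if h : l < k.1 then c ⟨k, h⟩ else Fin.cast (congrArg r (by omega)) b

/-- Glue a left partial index, a middle index and a right partial index to a full index. -/
def ttExt (l : ℕ) (a : ∀ j : {j : Fin (d + 1) // j.1 < l}, Fin (r j.1.1)) (b : Fin (r l))
    (c : ∀ j : {j : Fin (d + 1) // l < j.1}, Fin (r j.1.1)) :
    ∀ j : Fin (d + 1), Fin (r j.1) :=
  fun k => if h : k.1 < l then a ⟨k, h⟩ else if h' : l < k.1 then c ⟨k, h'⟩
    else Fin.cast (congrArg r (by omega)) b

lemma ttExt_of_le {l : ℕ} (a : ∀ j : {j : Fin (d + 1) // j.1 < l}, Fin (r j.1.1))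
    (b : Fin (r l)) (c : ∀ j : {j : Fin (d + 1) // l < j.1}, Fin (r j.1.1))
    (k : Fin (d + 1)) (hk : k.1 ≤ l) :
    ttExt r l a b c k = leftIdx r l a b k hk := by
  unfold ttExt leftIdx
  split_ifs with h h' <;> first | rfl | omega

lemma ttExt_of_ge {l : ℕ} (a : ∀ j : {j : Fin (d + 1) // j.1 < l}, Fin (r j.1.1))
    (b : Fin (r l)) (c : ∀ j : {j : Fin (d + 1) // l < j.1}, Fin (r j.1.1))
    (k : Fin (d + 1)) (hk : l ≤ k.1) :
    ttExt r l a b c k = rightIdx r l b c k hk := by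
  unfold ttExt rightIdx
  split_ifs with h h' <;> first | rfl | omega

/-- Splitting a full TT index into (left part, middle value, right part). -/
def ttSplit (l : ℕ) (hl : l ≤ d) :
    ((∀ j : {j : Fin (d + 1) // j.1 < l}, Fin (r j.1.1)) × Fin (r l) ×
      (∀ j : {j : Fin (d + 1) // l < j.1}, Fin (r j.1.1))) ≃ (∀ j : Fin (d + 1), Fin (r j.1)) where
  toFun := fun p => ttExt r l p.1 p.2.1 p.2.2
  invFun := fun α => (fun j => α j.1, α ⟨l, Nat.lt_succ_of_le hl⟩, fun j => α j.1)
  left_inv := by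
    rintro ⟨a, b, c⟩
    refine Prod.ext ?_ (Prod.ext ?_ ?_)
    · funext j
      simp only [ttExt, j.2, dif_pos]
    · show ttExt r l a b c ⟨l, Nat.lt_succ_of_le hl⟩ = b
      simp only [ttExt, lt_irrefl, dif_neg, not_false_iff]
      exact Fin.ext rfl
    · funext j
      have h1 : ¬ ((j : Fin (d + 1)).1 < l) := Nat.not_lt.mpr (le_of_lt j.2)
      simp only [ttExt, h1, j.2, dif_neg, dif_pos, not_false_iff]
  right_inv := by
    intro α
    funext k
    show ttExt r l _ _ _ k = α k
    unfold ttExt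
    split_ifs with h h'
    · rfl
    · rfl
    · obtain ⟨kv, hkv⟩ := k
      have hkl : l = kv := le_antisymm (Nat.le_of_not_lt h) (Nat.le_of_not_lt h')
      subst hkl
      exact Fin.ext rfl

lemma ttSplit_apply {l : ℕ} (hl : l ≤ d)
    (p : (∀ j : {j : Fin (d + 1) // j.1 < l}, Fin (r j.1.1)) × Fin (r l) ×
      (∀ j : {j : Fin (d + 1) // l < j.1}, Fin (r j.1.1))) :
    ttSplit r l hl p = ttExt r l p.1 p.2.1 p.2.2 := rfl

variable (G : ∀ j : Fin d, Fin (n j) → Fin (r j.1) → Fin (r (j.1 + 1)) → ℝ)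

/-- Left factor matrix of the split TT evaluation. -/
def Lmat (l : ℕ) : Matrix (∀ j : {j : Fin d // j.1 < l}, Fin (n j.1)) (Fin (r l)) ℝ :=
  fun x b => ∑ a : ∀ j : {j : Fin (d + 1) // j.1 < l}, Fin (r j.1.1),
    ∏ j : {j : Fin d // j.1 < l},
      G j.1 (x j) (leftIdx r l a b ⟨j.1.1, Nat.lt_succ_of_lt j.1.isLt⟩ (le_of_lt j.2))
        (leftIdx r l a b ⟨j.1.1 + 1, Nat.succ_lt_succ j.1.isLt⟩ (Nat.succ_le_of_lt j.2))

/-- Right factor matrix of the split TT evaluation. -/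
def Rmat (l : ℕ) : Matrix (Fin (r l)) (∀ j : {j : Fin d // ¬ j.1 < l}, Fin (n j.1)) ℝ :=
  fun b y => ∑ c : ∀ j : {j : Fin (d + 1) // l < j.1}, Fin (r j.1.1),
    ∏ j : {j : Fin d // ¬ j.1 < l},
      G j.1 (y j) (rightIdx r l b c ⟨j.1.1, Nat.lt_succ_of_lt j.1.isLt⟩ (Nat.le_of_not_lt j.2))
        (rightIdx r l b c ⟨j.1.1 + 1, Nat.succ_lt_succ j.1.isLt⟩ ((Nat.le_of_not_lt j.2).trans (Nat.le_succ _)))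

lemma matricize_eq_mul {T : (∀ j, Fin (n j)) → ℝ} (l : ℕ) (hl : l ≤ d)
    (hT : ∀ i, T i = ttEval r G i) :
    matricize T l = Lmat r G l * Rmat r G l := by
  funext x y
  rw [Matrix.mul_apply]
  show T (fun j => if h : j.1 < l then x ⟨j, h⟩ else y ⟨j, h⟩) = _
  set i : ∀ j, Fin (n j) := fun j => if h : j.1 < l then x ⟨j, h⟩ else y ⟨j, h⟩ with hi
  rw [hT, ttEval, ← Equiv.sum_comp (ttSplit r l hl)]
  have key : ∀ p : (∀ j : {j : Fin (d + 1) // j.1 < l}, Fin (r j.1.1)) × Fin (r l) ×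
      (∀ j : {j : Fin (d + 1) // l < j.1}, Fin (r j.1.1)),
      (∏ j : Fin d, G j (i j) (ttSplit r l hl p ⟨j.1, by omega⟩) (ttSplit r l hl p ⟨j.1 + 1, by omega⟩))
      = (∏ j : {j : Fin d // j.1 < l},
          G j.1 (x j) (leftIdx r l p.1 p.2.1 ⟨j.1.1, Nat.lt_succ_of_lt j.1.isLt⟩ (le_of_lt j.2))
            (leftIdx r l p.1 p.2.1 ⟨j.1.1 + 1, Nat.succ_lt_succ j.1.isLt⟩ (Nat.succ_le_of_lt j.2))) *
        (∏ j : {j : Fin d // ¬ j.1 < l},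
          G j.1 (y j) (rightIdx r l p.2.1 p.2.2 ⟨j.1.1, Nat.lt_succ_of_lt j.1.isLt⟩ (Nat.le_of_not_lt j.2))
            (rightIdx r l p.2.1 p.2.2 ⟨j.1.1 + 1, Nat.succ_lt_succ j.1.isLt⟩ ((Nat.le_of_not_lt j.2).trans (Nat.le_succ _)))) := by
    intro p
    simp only [ttSplit_apply r hl]
    rw [← Fintype.prod_subtype_mul_prod_subtype (fun j : Fin d => j.1 < l)]
    congr 1
    · refine Finset.prod_congr rfl fun j _ => ?_
      have hij : i j.1 = x j := by
        simp only [hi, j.2, dif_pos]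
      rw [hij,
        ttExt_of_le r p.1 p.2.1 p.2.2 ⟨j.1.1, Nat.lt_succ_of_lt j.1.isLt⟩ (le_of_lt j.2),
        ttExt_of_le r p.1 p.2.1 p.2.2 ⟨j.1.1 + 1, Nat.succ_lt_succ j.1.isLt⟩ (Nat.succ_le_of_lt j.2)]
    · refine Finset.prod_congr rfl fun j _ => ?_
      have hij : i j.1 = y j := by
        simp only [hi, j.2, dif_neg, not_false_iff]
      rw [hij,
        ttExt_of_ge r p.1 p.2.1 p.2.2 ⟨j.1.1, Nat.lt_succ_of_lt j.1.isLt⟩ (Nat.le_of_not_lt j.2),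
        ttExt_of_ge r p.1 p.2.1 p.2.2 ⟨j.1.1 + 1, Nat.succ_lt_succ j.1.isLt⟩ ((Nat.le_of_not_lt j.2).trans (Nat.le_succ _))]
  calc (∑ p : (∀ j : {j : Fin (d + 1) // j.1 < l}, Fin (r j.1.1)) × Fin (r l) ×
          (∀ j : {j : Fin (d + 1) // l < j.1}, Fin (r j.1.1)),
        ∏ j : Fin d, G j (i j) (ttSplit r l hl p ⟨j.1, by omega⟩) (ttSplit r l hl p ⟨j.1 + 1, by omega⟩))
      = ∑ a, ∑ b, ∑ c,
          (∏ j : {j : Fin d // j.1 < l},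
            G j.1 (x j) (leftIdx r l a b ⟨j.1.1, Nat.lt_succ_of_lt j.1.isLt⟩ (le_of_lt j.2))
              (leftIdx r l a b ⟨j.1.1 + 1, Nat.succ_lt_succ j.1.isLt⟩ (Nat.succ_le_of_lt j.2))) *
          (∏ j : {j : Fin d // ¬ j.1 < l},
            G j.1 (y j) (rightIdx r l b c ⟨j.1.1, Nat.lt_succ_of_lt j.1.isLt⟩ (Nat.le_of_not_lt j.2))
              (rightIdx r l b c ⟨j.1.1 + 1, Nat.succ_lt_succ j.1.isLt⟩ ((Nat.le_of_not_lt j.2).trans (Nat.le_succ _)))) := by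
        rw [Fintype.sum_prod_type]
        refine Finset.sum_congr rfl fun a _ => ?_
        rw [Fintype.sum_prod_type]
        refine Finset.sum_congr rfl fun b _ => Finset.sum_congr rfl fun c _ => ?_
        exact key (a, b, c)
    _ = ∑ b, Lmat r G l x b * Rmat r G l b y := by
        rw [Finset.sum_comm]
        refine Finset.sum_congr rfl fun b _ => ?_
        rw [Lmat, Rmat, Finset.sum_mul_sum]

end TTAux

/-- If `(G, r)` is a Tensor-Train decomposition of `T`, then for every
`l ∈ {1,…,d−1}` the rank of the `l`-matricization of `T` is at most `r l`. -/
theorem tt_rank_lower_bound {d : ℕ} {n : Fin d → ℕ} (T : (∀ j, Fin (n j)) → ℝ)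
    (r : ℕ → ℕ) (G : ∀ j : Fin d, Fin (n j) → Fin (r j.1) → Fin (r (j.1 + 1)) → ℝ)
    (hTT : IsTTRep T r G) :
    ∀ l : ℕ, 1 ≤ l → l ≤ d - 1 → (matricize T l).rank ≤ r l := by
  intro l hl1 hl2
  have hld : l ≤ d := by omega
  rw [matricize_eq_mul r G l hld hTT.2.2]
  calc (Lmat r G l * Rmat r G l).rank ≤ (Lmat r G l).rank := Matrix.rank_mul_le_left _ _
    _ ≤ Fintype.card (Fin (r l)) := Matrix.rank_le_card_width _
    _ = r l := Fintype.card_fin _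
end

section
/- Let a > 0, d ≥ 2, Ω = [−a,a]^d, k ∈ {1,…,d−1}, l ≤ min(k, d−k), and σ₁,…,σ_l ≥ 0. Define f_j(x) = exp(−σ_j·x_j·x_{k+j}) for j = 1,…,l. Let p₁,…,p_l : ℝ^d → ℝ be bounded measurable functions, let δ_j := sup_{x ∈ Ω} |f_j(x) − p_j(x)| and set ε_j := δ_j·exp(σ_j·a²). Let f₀ : ℝ^d → ℝ be measurable with f₀·f₁⋯f_l ∈ L²(Ω). Then for every i ∈ {1,…,l}: ‖f₀·p₁⋯p_{i−1}·f_{i+1}⋯f_l‖_{L²(Ω)} ≤ (∏_{j=1}^{i−1} (1 + ε_j)) · exp(σ_i·a²) · ‖f₀·f₁⋯f_l‖_{L²(Ω)}. -/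
open MeasureTheory Matrix

/-- Stability of the partially interpolated product: replacing the
first `i−1` exponential factors by their interpolants and dropping the `i`-th factor
changes the `L²(Ω)` norm by at most `(∏_{j<i} (1+ε_j)) e^{σ_i a²}`. -/
theorem partial_product_stability {d : ℕ} (hd : 2 ≤ d) (a : ℝ) (ha : 0 < a)
    (k : ℕ) (hk1 : 1 ≤ k) (hk2 : k ≤ d - 1) (l : ℕ) (hl : l ≤ min k (d - k))
    (σs : Fin l → ℝ) (hσs : ∀ j, 0 ≤ σs j)
    (f : Fin l → (Fin d → ℝ) → ℝ)
    (hf : ∀ (j : Fin l) (x : Fin d → ℝ),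
      f j x = Real.exp (-σs j * x ⟨j.1, by omega⟩ * x ⟨k + j.1, by omega⟩))
    (p : Fin l → (Fin d → ℝ) → ℝ) (hpmeas : ∀ j, Measurable (p j))
    (hpbdd : ∀ j, ∃ M, ∀ x, |p j x| ≤ M)
    (δ : Fin l → ℝ) (hδ : ∀ j, δ j = ⨆ x : cube d a, |f j x.1 - p j x.1|)
    (f0 : (Fin d → ℝ) → ℝ) (hf0 : Measurable f0)
    (hF : MemLp (fun x => f0 x * ∏ j, f j x) 2 (volume.restrict (cube d a))) :
    ∀ i : Fin l,
      eLpNorm (fun x => f0 x * (∏ j ∈ Finset.univ.filter (fun j => j < i), p j x) *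
            (∏ j ∈ Finset.univ.filter (fun j => i < j), f j x)) 2
          (volume.restrict (cube d a)) ≤
        ENNReal.ofReal
            ((∏ j ∈ Finset.univ.filter (fun j => j < i),
              (1 + δ j * Real.exp (σs j * a ^ 2))) * Real.exp (σs i * a ^ 2)) *
          eLpNorm (fun x => f0 x * ∏ j, f j x) 2 (volume.restrict (cube d a)) := by
  intro i
  classical
  set Ω := cube d a with hΩ
  have hΩmeas : MeasurableSet Ω := MeasurableSet.univ_pi fun _ => measurableSet_Icc
  -- bounds on f j on the cube
  have hcoord : ∀ x ∈ Ω, ∀ m : Fin d, |x m| ≤ a := by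
    intro x hx m
    have := hx m (Set.mem_univ m)
    simpa [abs_le] using this
  have hfpos : ∀ j x, 0 < f j x := by
    intro j x; rw [hf]; exact Real.exp_pos _
  have hfub : ∀ j, ∀ x ∈ Ω, f j x ≤ Real.exp (σs j * a ^ 2) := by
    intro j x hx
    rw [hf]
    apply Real.exp_le_exp.2
    have h1 := hcoord x hx ⟨j.1, by omega⟩
    have h2 := hcoord x hx ⟨k + j.1, by omega⟩
    have habs : |x ⟨j.1, by omega⟩ * x ⟨k + j.1, by omega⟩| ≤ a ^ 2 := by
      rw [abs_mul]
      calc |x ⟨j.1, by omega⟩| * |x ⟨k + j.1, by omega⟩| ≤ a * a :=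
            mul_le_mul h1 h2 (abs_nonneg _) ha.le
        _ = a ^ 2 := (sq a).symm
    have := neg_abs_le (x ⟨j.1, by omega⟩ * x ⟨k + j.1, by omega⟩)
    nlinarith [abs_nonneg (x ⟨j.1, by omega⟩ * x ⟨k + j.1, by omega⟩), hσs j]
  have hflb : ∀ j, ∀ x ∈ Ω, Real.exp (-(σs j * a ^ 2)) ≤ f j x := by
    intro j x hx
    rw [hf]
    apply Real.exp_le_exp.2
    have h1 := hcoord x hx ⟨j.1, by omega⟩
    have h2 := hcoord x hx ⟨k + j.1, by omega⟩
    have habs : |x ⟨j.1, by omega⟩ * x ⟨k + j.1, by omega⟩| ≤ a ^ 2 := by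
      rw [abs_mul]
      calc |x ⟨j.1, by omega⟩| * |x ⟨k + j.1, by omega⟩| ≤ a * a :=
            mul_le_mul h1 h2 (abs_nonneg _) ha.le
        _ = a ^ 2 := (sq a).symm
    have := le_abs_self (x ⟨j.1, by omega⟩ * x ⟨k + j.1, by omega⟩)
    nlinarith [hσs j]
  -- δ bounds
  have hδle : ∀ j, ∀ x ∈ Ω, |f j x - p j x| ≤ δ j := by
    intro j x hx
    rw [hδ]
    obtain ⟨M, hM⟩ := hpbdd j
    have hbdd : BddAbove (Set.range fun y : Ω => |f j y.1 - p j y.1|) := by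
      refine ⟨Real.exp (σs j * a ^ 2) + M, ?_⟩
      rintro _ ⟨y, rfl⟩
      calc |f j y.1 - p j y.1| ≤ |f j y.1| + |p j y.1| := abs_sub _ _
        _ ≤ Real.exp (σs j * a ^ 2) + M := by
            gcongr
            · rw [abs_of_pos (hfpos j y.1)]; exact hfub j y.1 y.2
            · exact hM y.1
    exact le_ciSup hbdd (⟨x, hx⟩ : Ω)
  have hΩne : (0 : Fin d → ℝ) ∈ Ω := by
    intro m _; constructor <;> simp [ha.le] <;> linarith
  have hδ0 : ∀ j, 0 ≤ δ j := fun j =>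
    le_trans (abs_nonneg _) (hδle j 0 hΩne)
  -- pointwise bound for p
  have hpbound : ∀ j, ∀ x ∈ Ω,
      |p j x| ≤ (1 + δ j * Real.exp (σs j * a ^ 2)) * f j x := by
    intro j x hx
    have h1 : |p j x| ≤ f j x + δ j := by
      have := hδle j x hx
      have h := abs_sub_abs_le_abs_sub (p j x) (f j x)
      rw [abs_sub_comm] at h
      have := le_trans h this
      have hfabs : |f j x| = f j x := abs_of_pos (hfpos j x)
      linarith [abs_of_pos (hfpos j x)]
    have h2 : δ j ≤ δ j * Real.exp (σs j * a ^ 2) * f j x := by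
      have hlb := hflb j x hx
      have : δ j * Real.exp (σs j * a ^ 2) * Real.exp (-(σs j * a ^ 2)) ≤
          δ j * Real.exp (σs j * a ^ 2) * f j x := by
        apply mul_le_mul_of_nonneg_left hlb
        exact mul_nonneg (hδ0 j) (Real.exp_pos _).le
      rwa [mul_assoc, ← Real.exp_add, add_neg_cancel, Real.exp_zero, mul_one] at this
    nlinarith [hfpos j x]
  -- constant
  set C := (∏ j ∈ Finset.univ.filter (fun j => j < i),
      (1 + δ j * Real.exp (σs j * a ^ 2))) * Real.exp (σs i * a ^ 2) with hCdef
  have hC0 : 0 ≤ C := by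
    apply mul_nonneg
    · apply Finset.prod_nonneg
      intro j _
      have h := mul_nonneg (hδ0 j) (Real.exp_pos (σs j * a ^ 2)).le
      linarith
    · positivity
  -- key pointwise bound
  have key : ∀ x ∈ Ω,
      ‖f0 x * (∏ j ∈ Finset.univ.filter (fun j => j < i), p j x) *
        (∏ j ∈ Finset.univ.filter (fun j => i < j), f j x)‖ ≤
      ‖C * (f0 x * ∏ j, f j x)‖ := by
    intro x hx
    have hprodpos : (0:ℝ) < ∏ j, f j x := Finset.prod_pos fun j _ => hfpos j x
    simp only [Real.norm_eq_abs, abs_mul, Finset.abs_prod]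
    rw [abs_of_nonneg hC0]
    have hall : (∏ j, |f j x|) = ∏ j, f j x :=
      Finset.prod_congr rfl fun j _ => abs_of_pos (hfpos j x)
    rw [hall]
    -- bound the p-product
    have hP : (∏ j ∈ Finset.univ.filter (fun j => j < i), |p j x|) ≤
        (∏ j ∈ Finset.univ.filter (fun j => j < i),
          (1 + δ j * Real.exp (σs j * a ^ 2))) *
        ∏ j ∈ Finset.univ.filter (fun j => j < i), f j x := by
      rw [← Finset.prod_mul_distrib]
      apply Finset.prod_le_prod (fun j _ => abs_nonneg _)
      intro j _
      exact hpbound j x hx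
    -- split the full product
    have hsplit : (∏ j, f j x) =
        (∏ j ∈ Finset.univ.filter (fun j => j < i), f j x) * (f i x *
          ∏ j ∈ Finset.univ.filter (fun j => i < j), f j x) := by
      rw [← Finset.prod_filter_mul_prod_filter_not Finset.univ (fun j => j < i)
        (fun j => f j x)]
      congr 1
      have : Finset.univ.filter (fun j => ¬ j < i) =
          insert i (Finset.univ.filter (fun j => i < j)) := by
        ext j
        simp only [Finset.mem_filter, Finset.mem_univ, true_and, Finset.mem_insert]
        constructor
        · intro h
          rcases lt_or_eq_of_le (not_lt.1 h) with h' | h'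
          · exact Or.inr h'
          · exact Or.inl h'.symm
        · rintro (rfl | h)
          · exact lt_irrefl _
          · exact not_lt.2 h.le
      rw [this, Finset.prod_insert (by simp)]
    have hone : (1:ℝ) ≤ Real.exp (σs i * a ^ 2) * f i x := by
      have hlb := hflb i x hx
      have : Real.exp (σs i * a ^ 2) * Real.exp (-(σs i * a ^ 2)) ≤
          Real.exp (σs i * a ^ 2) * f i x :=
        mul_le_mul_of_nonneg_left hlb (Real.exp_pos _).le
      rwa [← Real.exp_add, add_neg_cancel, Real.exp_zero] at this
    have hQabs : (∏ j ∈ Finset.univ.filter (fun j => i < j), |f j x|) =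
        ∏ j ∈ Finset.univ.filter (fun j => i < j), f j x :=
      Finset.prod_congr rfl fun j _ => abs_of_pos (hfpos j x)
    rw [hQabs, hsplit]
    have hQ0 : (0:ℝ) ≤ ∏ j ∈ Finset.univ.filter (fun j => i < j), f j x :=
      Finset.prod_nonneg fun j _ => (hfpos j x).le
    have hPf0 : (0:ℝ) ≤ ∏ j ∈ Finset.univ.filter (fun j => j < i), f j x :=
      Finset.prod_nonneg fun j _ => (hfpos j x).le
    have step1 : |f0 x| * (∏ j ∈ Finset.univ.filter (fun j => j < i), |p j x|) *
        (∏ j ∈ Finset.univ.filter (fun j => i < j), f j x) ≤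
        |f0 x| * ((∏ j ∈ Finset.univ.filter (fun j => j < i),
          (1 + δ j * Real.exp (σs j * a ^ 2))) *
          ∏ j ∈ Finset.univ.filter (fun j => j < i), f j x) *
        (∏ j ∈ Finset.univ.filter (fun j => i < j), f j x) :=
      mul_le_mul_of_nonneg_right (mul_le_mul_of_nonneg_left hP (abs_nonneg (f0 x))) hQ0
    refine step1.trans ?_
    have hPε0 : (0:ℝ) ≤ ∏ j ∈ Finset.univ.filter (fun j => j < i),
        (1 + δ j * Real.exp (σs j * a ^ 2)) := by
      apply Finset.prod_nonneg
      intro j _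
      have h := mul_nonneg (hδ0 j) (Real.exp_pos (σs j * a ^ 2)).le
      linarith
    have : |f0 x| * ((∏ j ∈ Finset.univ.filter (fun j => j < i),
          (1 + δ j * Real.exp (σs j * a ^ 2))) *
          ∏ j ∈ Finset.univ.filter (fun j => j < i), f j x) *
        (∏ j ∈ Finset.univ.filter (fun j => i < j), f j x) * 1 ≤
        |f0 x| * ((∏ j ∈ Finset.univ.filter (fun j => j < i),
          (1 + δ j * Real.exp (σs j * a ^ 2))) *
          ∏ j ∈ Finset.univ.filter (fun j => j < i), f j x) *
        (∏ j ∈ Finset.univ.filter (fun j => i < j), f j x) *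
        (Real.exp (σs i * a ^ 2) * f i x) := by
      apply mul_le_mul_of_nonneg_left hone
      have := abs_nonneg (f0 x)
      positivity
    rw [mul_one] at this
    refine this.trans_eq ?_
    rw [hCdef]
    ring
  -- conclude
  have hkey_ae : ∀ᵐ x ∂(volume.restrict Ω),
      ‖f0 x * (∏ j ∈ Finset.univ.filter (fun j => j < i), p j x) *
        (∏ j ∈ Finset.univ.filter (fun j => i < j), f j x)‖ ≤
      ‖C * (f0 x * ∏ j, f j x)‖ :=
    (ae_restrict_iff' hΩmeas).2 (Filter.Eventually.of_forall key)
  calc eLpNorm (fun x => f0 x * (∏ j ∈ Finset.univ.filter (fun j => j < i), p j x) *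
        (∏ j ∈ Finset.univ.filter (fun j => i < j), f j x)) 2 (volume.restrict Ω)
      ≤ eLpNorm (fun x => C * (f0 x * ∏ j, f j x)) 2 (volume.restrict Ω) :=
        eLpNorm_mono_ae hkey_ae
    _ = (‖C‖₊ : ENNReal) * eLpNorm (fun x => f0 x * ∏ j, f j x) 2
          (volume.restrict Ω) := by
        have := eLpNorm_const_smul (μ := volume.restrict Ω) (p := 2) C
          (f := fun x => f0 x * ∏ j, f j x)
        rw [enorm_eq_nnnorm] at this
        exact this
    _ = ENNReal.ofReal C * eLpNorm (fun x => f0 x * ∏ j, f j x) 2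
          (volume.restrict Ω) := by
        rw [← enorm_eq_nnnorm, Real.enorm_eq_ofReal hC0]
end
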